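/- Let x ∈ [0,1]^n be LP-feasible for a k-column-sparse packing instance, let w ∈ ℝ_{≥0}^n, and let S be a random subset of [n] including each item i independently with probability x_i/(4k). Let Alt(T) = { i ∈ T : for every j ∈ N(i), T contains no item i' ≠ i with s_{i'j} > 1/2, and Σ_{i' ∈ T : 0 < s_{i'j} ≤ 1/2} s_{i'j} ≤ 1 }. Then Alt(S) is always feasible for the instance, and E[ Σ_{i ∈ Alt(S)} w_i ] ≥ (1/(8k)) · Σ_{i=1}^n w_i x_i. (Hence randomized rounding with alteration is an 8k-approximation for k-column-sparse packing integer programs relative to the LP optimum.) -/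

import Mathlib

open Finset
open scoped Classical BigOperators

/-- Probability of the subset `T` under the product distribution on subsets of
`Fin n` with marginal probabilities `q`. -/
noncomputable def prodP {n : ℕ} (q : Fin n → ℝ) (T : Finset (Fin n)) : ℝ :=
  (∏ i ∈ T, q i) * ∏ i ∈ Tᶜ, (1 - q i)

/-- Expectation of `g(S)` where `S` is drawn from the product distribution with
marginals `q`. -/
noncomputable def exV {n : ℕ} (q : Fin n → ℝ) (g : Finset (Fin n) → ℝ) : ℝ :=
  ∑ T : Finset (Fin n), prodP q T * g T

/-- The alteration map: keep `i ∈ T` iff for every constraint `j ∈ N(i)`,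
`T` contains no other item that is big for `j`, and the total size of items of
`T` that are small for `j` is at most `1`. -/
noncomputable def altSet {n m : ℕ} (s : Fin n → Fin m → ℝ) (T : Finset (Fin n)) :
    Finset (Fin n) :=
  T.filter (fun i => ∀ j, 0 < s i j →
    (∀ i' ∈ T, i' ≠ i → s i' j ≤ 1/2) ∧
    (∑ i' ∈ T.filter (fun i'' => 0 < s i'' j ∧ s i'' j ≤ 1/2), s i' j) ≤ 1)

/-- randomized rounding (with probabilities `x i/(4k)`) followed by
alteration always yields a feasible set, and the expected weight of the altered
set is at least `1/(8k)` times the LP value: an `8k`-approximation. -/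
lemma prodP_nonneg {n : ℕ} {q : Fin n → ℝ} (hq0 : ∀ i, 0 ≤ q i) (hq1 : ∀ i, q i ≤ 1)
    (T : Finset (Fin n)) : 0 ≤ prodP q T := by
  apply mul_nonneg
  · exact Finset.prod_nonneg fun i _ => hq0 i
  · exact Finset.prod_nonneg fun i _ => by linarith [hq1 i]

lemma sum_prodP_supset {n : ℕ} (q : Fin n → ℝ) (A : Finset (Fin n)) :
    ∑ T ∈ univ.filter (fun T => A ⊆ T), prodP q T = ∏ a ∈ A, q a := by
  have key : ∑ T ∈ univ.filter (fun T => A ⊆ T), prodP q T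
      = ∑ t ∈ Aᶜ.powerset, (∏ a ∈ A, q a) * ((∏ i ∈ t, q i) * ∏ i ∈ Aᶜ \ t, (1 - q i)) := by
    apply Finset.sum_bij' (fun T _ => T \ A) (fun t _ => t ∪ A)
    · intro T hT
      simp only [mem_powerset]
      intro i hi
      simp only [mem_sdiff] at hi
      simp [mem_compl, hi.2]
    · intro t ht
      simp only [mem_filter, mem_univ, true_and]
      exact subset_union_right
    · intro T hT
      simp only [mem_filter, mem_univ, true_and] at hT
      rw [sdiff_union_self_eq_union, union_eq_left.mpr hT]
    · intro t ht
      simp only [mem_powerset] at ht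
      rw [union_sdiff_right]
      exact (sdiff_eq_self_of_disjoint (disjoint_left.mpr fun i hi => by
        have := ht hi; simp [mem_compl] at this; exact this)).symm ▸ rfl
    · intro T hT
      simp only [mem_filter, mem_univ, true_and] at hT
      unfold prodP
      have h1 : T = (T \ A) ∪ A := by
        rw [sdiff_union_self_eq_union, union_eq_left.mpr hT]
      have hdisj : Disjoint (T \ A) A := sdiff_disjoint
      have h2 : (∏ i ∈ T, q i) = (∏ a ∈ A, q a) * ∏ i ∈ T \ A, q i := by
        conv_lhs => rw [h1]
        rw [Finset.prod_union hdisj, mul_comm]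
      have h3 : Tᶜ = Aᶜ \ (T \ A) := by
        ext i
        simp only [mem_compl, mem_sdiff]
        constructor
        · intro hi
          exact ⟨fun hiA => hi (hT hiA), fun h => hi h.1⟩
        · intro ⟨hiA, hi⟩ hiT
          exact (hi ⟨hiT, hiA⟩)
      rw [h2, h3]
      ring
  rw [key, ← Finset.mul_sum, ← Finset.prod_add]
  have : ∀ i ∈ Aᶜ, q i + (1 - q i) = 1 := fun i _ => by ring
  rw [Finset.prod_congr rfl this, Finset.prod_const_one, mul_one]

lemma sum_prodP_mem {n : ℕ} (q : Fin n → ℝ) (i : Fin n) :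
    ∑ T ∈ univ.filter (fun T => i ∈ T), prodP q T = q i := by
  have := sum_prodP_supset q {i}
  simpa using this

lemma sum_prodP_pair {n : ℕ} (q : Fin n → ℝ) {i i' : Fin n} (h : i ≠ i') :
    ∑ T ∈ univ.filter (fun T => i ∈ T ∧ i' ∈ T), prodP q T = q i * q i' := by
  have := sum_prodP_supset q {i, i'}
  rw [Finset.prod_pair h] at this
  rw [← this]
  apply Finset.sum_congr
  · ext T; simp [insert_subset_iff]
  · intros; rfl

lemma union_bound {ι α : Type*} [Fintype α] (J : Finset ι) (A : Finset α)
    (P : ι → α → Prop) (p : α → ℝ) (hp : ∀ a, 0 ≤ p a)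
    (h : ∀ a ∈ A, ∃ j ∈ J, P j a) :
    ∑ a ∈ A, p a ≤ ∑ j ∈ J, ∑ a ∈ A.filter (P j), p a := by
  have step : ∀ a ∈ A, p a ≤ ∑ j ∈ J, (if P j a then p a else 0) := by
    intro a ha
    obtain ⟨j0, hj0, hP⟩ := h a ha
    calc p a = (if P j0 a then p a else 0) := by simp [hP]
    _ ≤ ∑ j ∈ J, (if P j a then p a else 0) :=
      Finset.single_le_sum (f := fun j => if P j a then p a else 0)
        (fun j _ => by split <;> simp [hp a]) hj0
  calc ∑ a ∈ A, p a ≤ ∑ a ∈ A, ∑ j ∈ J, (if P j a then p a else 0) :=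
        Finset.sum_le_sum step
  _ = ∑ j ∈ J, ∑ a ∈ A, (if P j a then p a else 0) := Finset.sum_comm
  _ = ∑ j ∈ J, ∑ a ∈ A.filter (P j), p a := by
      apply Finset.sum_congr rfl
      intro j _
      rw [Finset.sum_filter]

lemma sum_split {α : Type*} [Fintype α] (A F1 F2 : Finset α) (p : α → ℝ)
    (hp : ∀ a, 0 ≤ p a) (h : ∀ a ∈ A, a ∈ F1 ∨ a ∈ F2) :
    ∑ a ∈ A, p a ≤ ∑ a ∈ F1, p a + ∑ a ∈ F2, p a := by
  have h1 : ∑ a ∈ A, p a ≤ ∑ a ∈ F1 ∪ F2, p a :=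
    Finset.sum_le_sum_of_subset_of_nonneg
      (fun a ha => Finset.mem_union.mpr (h a ha)) (fun a _ _ => hp a)
  have h2 := Finset.sum_union_inter (s₁ := F1) (s₂ := F2) (f := p)
  have h3 : 0 ≤ ∑ a ∈ F1 ∩ F2, p a := Finset.sum_nonneg fun a _ => hp a
  linarith

lemma union_bound2 {ι α : Type*} (J : Finset ι) (A : Finset α)
    (P : ι → α → Prop) (B : ι → Finset α) (p : α → ℝ) (hp : ∀ a, 0 ≤ p a)
    (h : ∀ a ∈ A, ∃ j ∈ J, P j a)
    (hB : ∀ j ∈ J, ∀ a ∈ A, P j a → a ∈ B j) :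
    ∑ a ∈ A, p a ≤ ∑ j ∈ J, ∑ a ∈ B j, p a := by
  have step : ∀ a ∈ A, p a ≤ ∑ j ∈ J, (if P j a then p a else 0) := by
    intro a ha
    obtain ⟨j0, hj0, hP⟩ := h a ha
    calc p a = (if P j0 a then p a else 0) := by simp [hP]
    _ ≤ ∑ j ∈ J, (if P j a then p a else 0) :=
      Finset.single_le_sum (f := fun j => if P j a then p a else 0)
        (fun j _ => by split <;> simp [hp a]) hj0
  calc ∑ a ∈ A, p a ≤ ∑ a ∈ A, ∑ j ∈ J, (if P j a then p a else 0) :=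
        Finset.sum_le_sum step
  _ = ∑ j ∈ J, ∑ a ∈ A, (if P j a then p a else 0) := Finset.sum_comm
  _ ≤ ∑ j ∈ J, ∑ a ∈ B j, p a := by
      apply Finset.sum_le_sum
      intro j hj
      rw [← Finset.sum_filter]
      apply Finset.sum_le_sum_of_subset_of_nonneg _ (fun a _ _ => hp a)
      intro a ha
      rw [Finset.mem_filter] at ha
      exact hB j hj a ha.1 ha.2

lemma alt_feasible {n m : ℕ} (s : Fin n → Fin m → ℝ)
    (hs : ∀ i j, s i j ∈ Set.Icc (0:ℝ) 1)
    (T : Finset (Fin n)) (j : Fin m) : ∑ i ∈ altSet s T, s i j ≤ 1 := by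
  set A := altSet s T with hA
  have hsub : A ⊆ T := Finset.filter_subset _ _
  have hcond : ∀ i ∈ A, i ∈ T ∧ ∀ j, 0 < s i j →
      (∀ i' ∈ T, i' ≠ i → s i' j ≤ 1/2) ∧
      (∑ i' ∈ T.filter (fun i'' => 0 < s i'' j ∧ s i'' j ≤ 1/2), s i' j) ≤ 1 := by
    intro i hi
    rw [hA, altSet, Finset.mem_filter] at hi
    exact hi
  have hrw : ∑ i ∈ A.filter (fun i => 0 < s i j), s i j = ∑ i ∈ A, s i j :=
    Finset.sum_filter_of_ne (fun i _ hne => lt_of_le_of_ne (hs i j).1 (Ne.symm hne))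
  rw [← hrw]
  rcases Finset.eq_empty_or_nonempty (A.filter (fun i => 0 < s i j)) with he | ⟨i0, hi0⟩
  · rw [he]; simp
  · by_cases hbig : ∃ ib ∈ A.filter (fun i => 0 < s i j), 1/2 < s ib j
    · obtain ⟨ib, hib, hibbig⟩ := hbig
      have hsub' : A.filter (fun i => 0 < s i j) ⊆ {ib} := by
        intro i hi
        rw [Finset.mem_singleton]
        by_contra hne
        rw [Finset.mem_filter] at hi
        have hc := ((hcond i hi.1).2 j hi.2).1 ib (hsub (Finset.mem_filter.mp hib).1)
          (fun h => hne h.symm)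
        linarith
      calc ∑ i ∈ A.filter (fun i => 0 < s i j), s i j
          ≤ ∑ i ∈ ({ib} : Finset (Fin n)), s i j :=
            Finset.sum_le_sum_of_subset_of_nonneg hsub' (fun i _ _ => (hs i j).1)
        _ = s ib j := Finset.sum_singleton _ _
        _ ≤ 1 := (hs ib j).2
    · push_neg at hbig
      rw [Finset.mem_filter] at hi0
      have hsm := ((hcond i0 hi0.1).2 j hi0.2).2
      refine le_trans (Finset.sum_le_sum_of_subset_of_nonneg ?_ (fun i _ _ => (hs i j).1)) hsm
      intro i hi
      rw [Finset.mem_filter] at hi ⊢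
      exact ⟨hsub hi.1, hi.2, hbig i (Finset.mem_filter.mpr hi)⟩

lemma ite_sum_le {α : Type*} (A B : Finset α) (c : α → Prop) [DecidablePred c] (p : α → ℝ)
    (hp : ∀ a, 0 ≤ p a) (h : ∀ a ∈ A, c a → a ∈ B) :
    ∑ a ∈ A, (if c a then p a else 0) ≤ ∑ a ∈ B, p a := by
  rw [← Finset.sum_filter]
  apply Finset.sum_le_sum_of_subset_of_nonneg _ (fun a _ _ => hp a)
  intro a ha
  rw [Finset.mem_filter] at ha
  exact h a ha.1 ha.2

lemma bad_bound {n m k : ℕ} (hk : 1 ≤ k) (s : Fin n → Fin m → ℝ)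
    (hs : ∀ i j, s i j ∈ Set.Icc (0:ℝ) 1)
    (x : Fin n → ℝ) (hx : ∀ i, x i ∈ Set.Icc (0:ℝ) 1)
    (hLP : ∀ j, ∑ i, s i j * x i ≤ 1)
    (q : Fin n → ℝ) (hq : ∀ i, q i = x i / (4 * k))
    (hq0 : ∀ i, 0 ≤ q i) (hq1 : ∀ i, q i ≤ 1)
    (i : Fin n) (j : Fin m) :
    ∑ T ∈ univ.filter (fun T => i ∈ T ∧
        ((∃ i' ∈ T, i' ≠ i ∧ 1/2 < s i' j) ∨
         1 < ∑ i' ∈ T.filter (fun i'' => 0 < s i'' j ∧ s i'' j ≤ 1/2), s i' j)),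
      prodP q T ≤ q i / (2 * k) := by
  have hp : ∀ T, 0 ≤ prodP q T := prodP_nonneg hq0 hq1
  have hk0 : (0:ℝ) < (k:ℝ) := by exact_mod_cast hk
  set p := prodP q with hpdef
  set Ibig : Finset (Fin n) := univ.filter (fun i' => i' ≠ i ∧ 1/2 < s i' j) with hIbig
  set D : Finset (Fin n) :=
    univ.filter (fun i' => (0 < s i' j ∧ s i' j ≤ 1/2) ∧ i' ≠ i) with hD
  -- split into big-bad and small-bad
  have step1 : ∑ T ∈ univ.filter (fun T => i ∈ T ∧
        ((∃ i' ∈ T, i' ≠ i ∧ 1/2 < s i' j) ∨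
         1 < ∑ i' ∈ T.filter (fun i'' => 0 < s i'' j ∧ s i'' j ≤ 1/2), s i' j)), p T
      ≤ (∑ T ∈ univ.filter (fun T => i ∈ T ∧ ∃ i' ∈ T, i' ≠ i ∧ 1/2 < s i' j), p T)
        + ∑ T ∈ univ.filter (fun T => i ∈ T ∧
            1 < ∑ i' ∈ T.filter (fun i'' => 0 < s i'' j ∧ s i'' j ≤ 1/2), s i' j), p T := by
    apply sum_split _ _ _ _ hp
    intro T hT
    rw [Finset.mem_filter] at hT
    rcases hT.2.2 with h | h
    · left; rw [Finset.mem_filter]; exact ⟨Finset.mem_univ _, hT.2.1, h⟩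
    · right; rw [Finset.mem_filter]; exact ⟨Finset.mem_univ _, hT.2.1, h⟩
  -- big-bad bound
  have big1 : (∑ T ∈ univ.filter (fun T => i ∈ T ∧ ∃ i' ∈ T, i' ≠ i ∧ 1/2 < s i' j), p T)
      ≤ ∑ i' ∈ Ibig, q i * q i' := by
    have hub := union_bound2 Ibig
      (univ.filter (fun T => i ∈ T ∧ ∃ i' ∈ T, i' ≠ i ∧ 1/2 < s i' j))
      (fun i' T => i' ∈ T)
      (fun i' => univ.filter (fun T => i ∈ T ∧ i' ∈ T)) p hp ?_ ?_
    · refine le_trans hub (le_of_eq (Finset.sum_congr rfl ?_))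
      intro i' hi'
      rw [hIbig, Finset.mem_filter] at hi'
      exact sum_prodP_pair q (Ne.symm hi'.2.1)
    · intro T hT
      rw [Finset.mem_filter] at hT
      obtain ⟨i', hi'T, hi'ne, hi'big⟩ := hT.2.2
      exact ⟨i', by rw [hIbig, Finset.mem_filter]; exact ⟨Finset.mem_univ _, hi'ne, hi'big⟩, hi'T⟩
    · intro i' _ T hT hPT
      rw [Finset.mem_filter] at hT ⊢
      exact ⟨Finset.mem_univ _, hT.2.1, hPT⟩
  -- small-bad bound via Markov
  set g : Finset (Fin n) → ℝ := fun T => ∑ i' ∈ D, (if i' ∈ T then s i' j else 0) with hg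
  have hgnn : ∀ T, 0 ≤ g T := by
    intro T
    apply Finset.sum_nonneg
    intro i' _
    split
    · exact (hs i' j).1
    · exact le_rfl
  have hgbig : ∀ T ∈ univ.filter (fun T => i ∈ T ∧
      1 < ∑ i' ∈ T.filter (fun i'' => 0 < s i'' j ∧ s i'' j ≤ 1/2), s i' j), 1/2 < g T := by
    intro T hT
    rw [Finset.mem_filter] at hT
    obtain ⟨-, hiT, hsum⟩ := hT
    have hgeq : g T = ∑ i' ∈ (T.filter (fun i'' => 0 < s i'' j ∧ s i'' j ≤ 1/2)).erase i,
        s i' j := by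
      show (∑ i' ∈ D, if i' ∈ T then s i' j else 0) = _
      rw [Finset.sum_ite_mem]
      apply Finset.sum_congr _ (fun _ _ => rfl)
      ext i'
      simp only [hD, Finset.mem_inter, Finset.mem_filter, Finset.mem_erase, Finset.mem_univ,
        true_and]
      tauto
    by_cases hin : i ∈ T.filter (fun i'' => 0 < s i'' j ∧ s i'' j ≤ 1/2)
    · have := Finset.sum_erase_add _ (fun i' => s i' j) hin
      have hsij : s i j ≤ 1/2 := (Finset.mem_filter.mp hin).2.2
      rw [hgeq]; linarith
    · rw [hgeq, Finset.erase_eq_of_notMem hin]; linarith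
  have small1 : (∑ T ∈ univ.filter (fun T => i ∈ T ∧
        1 < ∑ i' ∈ T.filter (fun i'' => 0 < s i'' j ∧ s i'' j ≤ 1/2), s i' j), p T)
      ≤ ∑ i' ∈ D, 2 * s i' j * (q i * q i') := by
    have st1 : (∑ T ∈ univ.filter (fun T => i ∈ T ∧
        1 < ∑ i' ∈ T.filter (fun i'' => 0 < s i'' j ∧ s i'' j ≤ 1/2), s i' j), p T)
        ≤ ∑ T ∈ univ.filter (fun T => i ∈ T), p T * (2 * g T) := by
      refine le_trans (Finset.sum_le_sum (fun T hT => ?_))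
        (Finset.sum_le_sum_of_subset_of_nonneg ?_ ?_)
      · show p T ≤ p T * (2 * g T)
        have := hgbig T hT
        nlinarith [hp T]
      · intro T hT
        rw [Finset.mem_filter] at hT ⊢
        exact ⟨Finset.mem_univ _, hT.2.1⟩
      · intro T _ _
        have h1 := hgnn T
        have h2 := hp T
        positivity
    refine le_trans st1 ?_
    calc ∑ T ∈ univ.filter (fun T => i ∈ T), p T * (2 * g T)
        = ∑ T ∈ univ.filter (fun T => i ∈ T), ∑ i' ∈ D,
            (if i' ∈ T then 2 * s i' j * p T else 0) := by
          apply Finset.sum_congr rfl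
          intro T _
          rw [hg, Finset.mul_sum, Finset.mul_sum]
          apply Finset.sum_congr rfl
          intro i' _
          split <;> ring
      _ = ∑ i' ∈ D, ∑ T ∈ univ.filter (fun T => i ∈ T),
            (if i' ∈ T then 2 * s i' j * p T else 0) := Finset.sum_comm
      _ ≤ ∑ i' ∈ D, 2 * s i' j * (q i * q i') := by
          apply Finset.sum_le_sum
          intro i' hi'
          rw [hD, Finset.mem_filter] at hi'
          have hpair := sum_prodP_pair q (Ne.symm hi'.2.2)
          have hle := ite_sum_le (univ.filter (fun T => i ∈ T))
            (univ.filter (fun T => i ∈ T ∧ i' ∈ T)) (fun T => i' ∈ T)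
            (fun T => 2 * s i' j * p T)
            (fun T => by have h1 := hp T; have h2 := (hs i' j).1; positivity)
            (fun T hT hc => by
              rw [Finset.mem_filter] at hT ⊢
              exact ⟨Finset.mem_univ _, hT.2, hc⟩)
          refine le_trans hle (le_of_eq ?_)
          rw [← Finset.mul_sum, hpair]
  -- combine and bound arithmetically
  have harith : (∑ i' ∈ Ibig, q i * q i') + (∑ i' ∈ D, 2 * s i' j * (q i * q i'))
      ≤ q i / (2 * k) := by
    have hbigterm : ∀ i' ∈ Ibig, q i * q i' ≤ q i * (s i' j * x i' / (2 * k)) := by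
      intro i' hi'
      rw [hIbig, Finset.mem_filter] at hi'
      apply mul_le_mul_of_nonneg_left _ (hq0 i)
      rw [hq i']
      rw [div_le_div_iff₀ (by positivity) (by positivity)]
      nlinarith [(hx i').1, hi'.2.2, mul_nonneg (hx i').1 (le_of_lt hk0),
        mul_pos hk0 (sub_pos.mpr hi'.2.2)]
    have hsmterm : ∀ i' ∈ D, 2 * s i' j * (q i * q i') ≤ q i * (s i' j * x i' / (2 * k)) := by
      intro i' hi'
      rw [hD, Finset.mem_filter] at hi'
      rw [hq i']
      have : 2 * s i' j * (q i * (x i' / (4 * k))) = q i * (s i' j * x i' / (2 * k)) := by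
        field_simp
        ring
      rw [this]
    have hbd : (∑ i' ∈ Ibig, q i * q i') + (∑ i' ∈ D, 2 * s i' j * (q i * q i'))
        ≤ ∑ i' ∈ Ibig, q i * (s i' j * x i' / (2 * k))
          + ∑ i' ∈ D, q i * (s i' j * x i' / (2 * k)) :=
      add_le_add (Finset.sum_le_sum hbigterm) (Finset.sum_le_sum hsmterm)
    have hdisj : Disjoint Ibig D := by
      rw [Finset.disjoint_left]
      intro i' h1 h2
      rw [hIbig, Finset.mem_filter] at h1
      rw [hD, Finset.mem_filter] at h2
      linarith [h1.2.2, h2.2.1.2]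
    have hunion : ∑ i' ∈ Ibig, q i * (s i' j * x i' / (2 * k))
          + ∑ i' ∈ D, q i * (s i' j * x i' / (2 * k))
        = ∑ i' ∈ Ibig ∪ D, q i * (s i' j * x i' / (2 * k)) :=
      (Finset.sum_union hdisj).symm
    have hext : ∑ i' ∈ Ibig ∪ D, q i * (s i' j * x i' / (2 * k))
        ≤ ∑ i' ∈ univ, q i * (s i' j * x i' / (2 * k)) := by
      apply Finset.sum_le_sum_of_subset_of_nonneg (Finset.subset_univ _)
      intro i' _ _
      have := (hs i' j).1
      have := (hx i').1
      have := hq0 i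
      positivity
    have hfinal : ∑ i' ∈ univ, q i * (s i' j * x i' / (2 * k)) ≤ q i / (2 * k) := by
      have : ∑ i' ∈ univ, q i * (s i' j * x i' / (2 * k))
          = q i / (2 * k) * ∑ i' ∈ univ, s i' j * x i' := by
        rw [Finset.mul_sum]
        apply Finset.sum_congr rfl
        intro i' _
        field_simp
      rw [this]
      have hLPj := hLP j
      have hq0i := hq0 i
      calc q i / (2 * k) * ∑ i' ∈ univ, s i' j * x i' ≤ q i / (2 * k) * 1 := by
            apply mul_le_mul_of_nonneg_left hLPj (by positivity)
        _ = q i / (2 * k) := mul_one _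
    linarith
  linarith


theorem eight_k_approximation (n m k : ℕ) (s : Fin n → Fin m → ℝ)
    (hs : ∀ i j, s i j ∈ Set.Icc (0:ℝ) 1)
    (hsparse : ∀ i, ((univ : Finset (Fin m)).filter (fun j => 0 < s i j)).card ≤ k)
    (x : Fin n → ℝ) (hx : ∀ i, x i ∈ Set.Icc (0:ℝ) 1)
    (hLP : ∀ j, ∑ i, s i j * x i ≤ 1)
    (w : Fin n → ℝ) (hw : ∀ i, 0 ≤ w i)
    (q : Fin n → ℝ) (hq : ∀ i, q i = x i / (4 * k)) :
    (∀ T : Finset (Fin n), ∀ j : Fin m, ∑ i ∈ altSet s T, s i j ≤ 1) ∧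
    exV q (fun T => ∑ i ∈ altSet s T, w i) ≥ (1 / (8 * k)) * ∑ i, w i * x i := by
  refine ⟨fun T j => alt_feasible s hs T j, ?_⟩
  by_cases hk : k = 0
  · subst hk
    have hq0' : ∀ i, q i = 0 := fun i => by rw [hq i]; norm_num
    rw [ge_iff_le]
    calc (1 / (8 * ((0:ℕ):ℝ))) * ∑ i, w i * x i = 0 := by norm_num
      _ ≤ exV q (fun T => ∑ i ∈ altSet s T, w i) := by
          apply Finset.sum_nonneg
          intro T _
          apply mul_nonneg
          · exact prodP_nonneg (fun i => by rw [hq0' i]) (fun i => by rw [hq0' i]; norm_num) T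
          · exact Finset.sum_nonneg fun i _ => hw i
  · have hk1 : 1 ≤ k := Nat.one_le_iff_ne_zero.mpr hk
    have hk0 : (0:ℝ) < (k:ℝ) := by exact_mod_cast hk1
    have hq0 : ∀ i, 0 ≤ q i := by
      intro i
      rw [hq i]
      have := (hx i).1
      positivity
    have hq1 : ∀ i, q i ≤ 1 := by
      intro i
      rw [hq i, div_le_one (by positivity)]
      have hk1' : (1:ℝ) ≤ (k:ℝ) := by exact_mod_cast hk1
      nlinarith [(hx i).2]
    have hp : ∀ T, 0 ≤ prodP q T := prodP_nonneg hq0 hq1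
    -- rewrite the expectation as a sum over items
    have hE : exV q (fun T => ∑ i ∈ altSet s T, w i)
        = ∑ i, w i * ∑ T ∈ univ.filter (fun T => i ∈ altSet s T), prodP q T := by
      unfold exV
      calc ∑ T : Finset (Fin n), prodP q T * ∑ i ∈ altSet s T, w i
          = ∑ T : Finset (Fin n), ∑ i ∈ univ,
              (if i ∈ altSet s T then prodP q T * w i else 0) := by
            apply Finset.sum_congr rfl
            intro T _
            rw [Finset.sum_ite_mem, Finset.univ_inter, Finset.mul_sum]
        _ = ∑ i ∈ univ, ∑ T : Finset (Fin n),
              (if i ∈ altSet s T then prodP q T * w i else 0) := Finset.sum_comm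
        _ = ∑ i, w i * ∑ T ∈ univ.filter (fun T => i ∈ altSet s T), prodP q T := by
            apply Finset.sum_congr rfl
            intro i _
            rw [← Finset.sum_filter, Finset.mul_sum]
            apply Finset.sum_congr rfl
            intro T _
            ring
    -- per-item lower bound
    have key : ∀ i, q i / 2 ≤ ∑ T ∈ univ.filter (fun T => i ∈ altSet s T), prodP q T := by
      intro i
      set N : Finset (Fin m) := univ.filter (fun j => 0 < s i j) with hN
      have h1 : q i = ∑ T ∈ univ.filter (fun T => i ∈ T), prodP q T := (sum_prodP_mem q i).symm
      have h2 : ∑ T ∈ univ.filter (fun T => i ∈ T), prodP q T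
          ≤ (∑ T ∈ univ.filter (fun T => i ∈ altSet s T), prodP q T)
            + ∑ T ∈ univ.filter (fun T => i ∈ T ∧ ∃ j ∈ N, (∃ i' ∈ T, i' ≠ i ∧ 1/2 < s i' j) ∨
                1 < ∑ i' ∈ T.filter (fun i'' => 0 < s i'' j ∧ s i'' j ≤ 1/2), s i' j),
              prodP q T := by
        apply sum_split _ _ _ _ hp
        intro T hT
        rw [Finset.mem_filter] at hT
        by_cases halt : i ∈ altSet s T
        · left; rw [Finset.mem_filter]; exact ⟨Finset.mem_univ _, halt⟩
        · right
          rw [Finset.mem_filter]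
          refine ⟨Finset.mem_univ _, hT.2, ?_⟩
          by_contra hno
          push_neg at hno
          apply halt
          rw [altSet, Finset.mem_filter]
          refine ⟨hT.2, fun j hj => ?_⟩
          have hjN : j ∈ N := by rw [hN, Finset.mem_filter]; exact ⟨Finset.mem_univ _, hj⟩
          exact hno j hjN
      have h3 : (∑ T ∈ univ.filter (fun T => i ∈ T ∧ ∃ j ∈ N, (∃ i' ∈ T, i' ≠ i ∧ 1/2 < s i' j) ∨
                1 < ∑ i' ∈ T.filter (fun i'' => 0 < s i'' j ∧ s i'' j ≤ 1/2), s i' j),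
              prodP q T)
          ≤ ∑ j ∈ N, ∑ T ∈ univ.filter (fun T => i ∈ T ∧
              ((∃ i' ∈ T, i' ≠ i ∧ 1/2 < s i' j) ∨
               1 < ∑ i' ∈ T.filter (fun i'' => 0 < s i'' j ∧ s i'' j ≤ 1/2), s i' j)),
              prodP q T := by
        apply union_bound2 N _
          (fun j T => i ∈ T ∧ ((∃ i' ∈ T, i' ≠ i ∧ 1/2 < s i' j) ∨
               1 < ∑ i' ∈ T.filter (fun i'' => 0 < s i'' j ∧ s i'' j ≤ 1/2), s i' j))
          _ _ hp
        · intro T hT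
          rw [Finset.mem_filter] at hT
          obtain ⟨j, hjN, hbad⟩ := hT.2.2
          exact ⟨j, hjN, hT.2.1, hbad⟩
        · intro j _ T _ hPT
          rw [Finset.mem_filter]
          exact ⟨Finset.mem_univ _, hPT⟩
      have h4 : ∑ j ∈ N, ∑ T ∈ univ.filter (fun T => i ∈ T ∧
              ((∃ i' ∈ T, i' ≠ i ∧ 1/2 < s i' j) ∨
               1 < ∑ i' ∈ T.filter (fun i'' => 0 < s i'' j ∧ s i'' j ≤ 1/2), s i' j)),
              prodP q T ≤ q i / 2 := by
        calc ∑ j ∈ N, ∑ T ∈ univ.filter (fun T => i ∈ T ∧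
              ((∃ i' ∈ T, i' ≠ i ∧ 1/2 < s i' j) ∨
               1 < ∑ i' ∈ T.filter (fun i'' => 0 < s i'' j ∧ s i'' j ≤ 1/2), s i' j)),
              prodP q T
            ≤ ∑ j ∈ N, q i / (2 * k) := by
              apply Finset.sum_le_sum
              intro j _
              exact bad_bound hk1 s hs x hx hLP q hq hq0 hq1 i j
          _ = N.card * (q i / (2 * k)) := by rw [Finset.sum_const, nsmul_eq_mul]
          _ ≤ k * (q i / (2 * k)) := by
              apply mul_le_mul_of_nonneg_right _ (div_nonneg (hq0 i) (by positivity))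
              exact_mod_cast hsparse i
          _ = q i / 2 := by field_simp
      linarith
    rw [hE, ge_iff_le]
    calc (1 / (8 * (k:ℝ))) * ∑ i, w i * x i = ∑ i, w i * (q i / 2) := by
          rw [Finset.mul_sum]
          apply Finset.sum_congr rfl
          intro i _
          rw [hq i, div_div, show (4:ℝ) * k * 2 = 8 * k by ring, mul_div_assoc']
          ring
      _ ≤ ∑ i, w i * ∑ T ∈ univ.filter (fun T => i ∈ altSet s T), prodP q T := by
          apply Finset.sum_le_sum
          intro i _
          exact mul_le_mul_of_nonneg_left (key i) (hw i)
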